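/- If the vector (λ₁,...,λₙ) weakly supermajorizes (μ₁,...,μₙ) (i.e., ∑_{i=1}^j λ_(i) ≤ ∑_{i=1}^j μ_(i) for all j = 1,...,n, where λ_(1) ≤ ... ≤ λ_(n) is the increasing rearrangement), then for every r > 0 and every u ∈ (0,1), ∑_{i=1}^n r/(1-(1-λᵢ)u) ≥ ∑_{i=1}^n r/(1-(1-μᵢ)u). (This is the key inequality showing r_{X_{1:n}}(x) ≥ r_{Y_{1:n}}(x) for series systems under the PO model.) -/

import Mathlib

open Finset

lemma sum_Iic_fin {n : ℕ} (f : Fin n → ℝ) (j : Fin n) :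
    ∑ i ∈ Finset.Iic j, f i
      = ∑ i ∈ Finset.range ((j:ℕ)+1), (fun i => if h : i < n then f ⟨i,h⟩ else 0) i := by
  refine Finset.sum_bij' (fun a _ => (a : ℕ)) (fun i hi => ⟨i, ?_⟩) ?_ ?_ ?_ ?_ ?_
  · exact lt_of_lt_of_le (Finset.mem_range.mp hi) j.isLt
  · intro a ha
    simp only [Finset.mem_range, Nat.lt_succ_iff]
    exact Fin.le_def.mp (Finset.mem_Iic.mp ha)
  · intro a ha
    simp only [Finset.mem_Iic, Fin.le_def]
    exact Nat.lt_succ_iff.mp (Finset.mem_range.mp ha)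
  · intro a ha; rfl
  · intro a ha; rfl
  · intro a ha; simp [a.isLt]

lemma abel_ge {n : ℕ} (c d : ℕ → ℝ) (hc : Antitone c)
    (hS : ∀ j, j ≤ n → 0 ≤ ∑ i ∈ Finset.range j, d i) :
    c n * ∑ i ∈ Finset.range n, d i ≤ ∑ i ∈ Finset.range n, c i * d i := by
  induction n with
  | zero => simp
  | succ m ih =>
    have h1 : c m * ∑ i ∈ Finset.range m, d i ≤ ∑ i ∈ Finset.range m, c i * d i :=
      ih (fun j hj => hS j (le_trans hj (Nat.le_succ m)))
    rw [Finset.sum_range_succ, Finset.sum_range_succ]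
    have h2 : c (m+1) * ∑ i ∈ Finset.range (m+1), d i ≤ c m * ∑ i ∈ Finset.range (m+1), d i :=
      mul_le_mul_of_nonneg_right (hc (Nat.le_succ m)) (hS (m+1) le_rfl)
    rw [Finset.sum_range_succ] at h2
    nlinarith

lemma tangent (r u A x y : ℝ) (hr : 0 < r) (hu : 0 < u) (hx : 0 < A + x*u) (hy : 0 < A + y*u) :
    r*u/(A+y*u)^2 * (y - x) ≤ r/(A+x*u) - r/(A+y*u) := by
  rw [div_sub_div _ _ hx.ne' hy.ne', div_mul_eq_mul_div,
    div_le_div_iff₀ (by positivity) (mul_pos hx hy)]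
  nlinarith [sq_nonneg ((A+y*u)*(x-y)), mul_pos hx hy, mul_pos hr hu,
    mul_nonneg (mul_nonneg hr.le hu.le) (sq_nonneg ((x-y)*u))]

/-- `x` weakly supermajorizes `y`: partial sums of the increasing rearrangement
of `x` are dominated by those of `y`. -/
def WSupermaj {n : ℕ} (x y : Fin n → ℝ) : Prop :=
  ∀ j : Fin n, ∑ i ∈ Finset.Iic j, (x ∘ Tuple.sort x) i ≤
    ∑ i ∈ Finset.Iic j, (y ∘ Tuple.sort y) i

theorem series_po_hazard_ge_of_wSupermaj {n : ℕ} (lam mu : Fin n → ℝ)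
    (hlam : ∀ i, 0 < lam i) (hmu : ∀ i, 0 < mu i)
    (hmaj : WSupermaj lam mu) :
    ∀ r : ℝ, 0 < r → ∀ u : ℝ, u ∈ Set.Ioo (0:ℝ) 1 →
      ∑ i, r / (1 - (1 - lam i) * u) ≥ ∑ i, r / (1 - (1 - mu i) * u) := by
  intro r hr u hu
  obtain ⟨hu0, hu1⟩ := hu
  set A : ℝ := 1 - u with hA
  have hA0 : 0 < A := by simp [hA]; linarith
  set a : Fin n → ℝ := lam ∘ Tuple.sort lam with ha
  set b : Fin n → ℝ := mu ∘ Tuple.sort mu with hb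
  have hamon : Monotone a := Tuple.monotone_sort lam
  have hbmon : Monotone b := Tuple.monotone_sort mu
  have hapos : ∀ i, 0 < a i := fun i => hlam _
  have hbpos : ∀ i, 0 < b i := fun i => hmu _
  have hda : ∀ i, 0 < A + a i * u := fun i => by nlinarith [mul_pos (hapos i) hu0]
  have hdb : ∀ i, 0 < A + b i * u := fun i => by nlinarith [mul_pos (hbpos i) hu0]
  -- rewrite the sums via the sorting permutations
  have hrewa : ∑ i, r / (1 - (1 - lam i) * u) = ∑ i, r / (A + a i * u) := by
    rw [← Equiv.sum_comp (Tuple.sort lam) (fun i => r / (1 - (1 - lam i) * u))]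
    refine Finset.sum_congr rfl fun i _ => ?_
    simp [ha, hA]; ring_nf
  have hrewb : ∑ i, r / (1 - (1 - mu i) * u) = ∑ i, r / (A + b i * u) := by
    rw [← Equiv.sum_comp (Tuple.sort mu) (fun i => r / (1 - (1 - mu i) * u))]
    refine Finset.sum_congr rfl fun i _ => ?_
    simp [hb, hA]; ring_nf
  rw [ge_iff_le, hrewa, hrewb]
  -- tangent bound coefficients
  set c : Fin n → ℝ := fun i => r * u / (A + b i * u)^2 with hcdef
  have htan : ∀ i, c i * (b i - a i) ≤ r / (A + a i * u) - r / (A + b i * u) :=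
    fun i => tangent r u A (a i) (b i) hr hu0 (hda i) (hdb i)
  -- extended functions on ℕ
  set c' : ℕ → ℝ := fun i => if h : i < n then c ⟨i, h⟩ else 0 with hc'
  set d' : ℕ → ℝ := fun i => if h : i < n then b ⟨i, h⟩ - a ⟨i, h⟩ else 0 with hd'
  have hc'anti : Antitone c' := by
    intro i j hij
    simp only [hc']
    by_cases hjn : j < n
    · have hin' : i < n := lt_of_le_of_lt hij hjn
      rw [dif_pos hjn, dif_pos hin']
      have hble : b ⟨i, hin'⟩ ≤ b ⟨j, hjn⟩ := hbmon (by simpa [Fin.le_def] using hij)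
      apply div_le_div_of_nonneg_left (by positivity) (pow_pos (hdb ⟨i, hin'⟩) 2)
      have : A + b ⟨i, hin'⟩ * u ≤ A + b ⟨j, hjn⟩ * u := by
        have := mul_le_mul_of_nonneg_right hble hu0.le; linarith
      nlinarith [hdb ⟨i, hin'⟩, hdb ⟨j, hjn⟩]
    · rw [dif_neg hjn]
      by_cases hin : i < n
      · rw [dif_pos hin]; positivity
      · rw [dif_neg hin]
  have hS : ∀ j, j ≤ n → 0 ≤ ∑ i ∈ Finset.range j, d' i := by
    intro j hj
    match j, hj with
    | 0, _ => simp
    | (k+1), hj =>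
      have hk : k < n := hj
      have := hmaj ⟨k, hk⟩
      have h1 := sum_Iic_fin (fun i => b i - a i) ⟨k, hk⟩
      rw [Finset.sum_sub_distrib] at h1
      simp only [hd']
      rw [← h1]
      linarith
  have habel := abel_ge c' d' hc'anti hS
  have hc'n : c' n = 0 := by simp [hc']
  rw [hc'n, zero_mul] at habel
  have hsum1 : ∑ i ∈ Finset.range n, c' i * d' i = ∑ i : Fin n, c i * (b i - a i) := by
    rw [← Fin.sum_univ_eq_sum_range (fun i => c' i * d' i) n]
    refine Finset.sum_congr rfl fun i _ => ?_
    simp [hc', hd', i.isLt]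
  rw [hsum1] at habel
  have hstep : ∑ i : Fin n, c i * (b i - a i) ≤
      ∑ i : Fin n, (r / (A + a i * u) - r / (A + b i * u)) :=
    Finset.sum_le_sum fun i _ => htan i
  rw [Finset.sum_sub_distrib] at hstep
  linarith
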